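/- For density matrices ρ and σ on a finite-dimensional Hilbert space, ‖ρ - σ‖₁ ≤ 2√(1 - F(ρ,σ)²), where F(ρ,σ) = tr√(σ^{1/2} ρ σ^{1/2}) is the fidelity. (Fuchs–van de Graaf inequality.) -/

import Mathlib

open Matrix
open scoped ComplexOrder

/-- The trace norm `‖A‖₁ = tr |A|` of a Hermitian matrix, as the sum of the absolute
values of its eigenvalues. -/
noncomputable def traceNorm {n : Type*} [Fintype n] [DecidableEq n]
    {A : Matrix n n ℂ} (hA : A.IsHermitian) : ℝ :=
  ∑ i, |hA.eigenvalues i|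

/-- The positive semidefinite square root of a positive semidefinite matrix
(the definition `Matrix.PosSemidef.sqrt` of the older Mathlib, since removed). -/
noncomputable def Matrix.PosSemidef.sqrt {n : Type*} [Fintype n] [DecidableEq n]
    {𝕜 : Type*} [RCLike 𝕜] {A : Matrix n n 𝕜} (hA : A.PosSemidef) : Matrix n n 𝕜 :=
  hA.1.eigenvectorUnitary.1 * diagonal ((↑) ∘ (√·) ∘ hA.1.eigenvalues) *
  (star hA.1.eigenvectorUnitary : Matrix n n 𝕜)

lemma Matrix.PosSemidef.posSemidef_sqrt {n : Type*} [Fintype n] [DecidableEq n]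
    {A : Matrix n n ℂ} (hA : A.PosSemidef) : hA.sqrt.PosSemidef := by
  unfold Matrix.PosSemidef.sqrt
  have hd : (diagonal ((↑) ∘ (√·) ∘ hA.1.eigenvalues) : Matrix n n ℂ).PosSemidef :=
    Matrix.PosSemidef.diagonal fun i => by
      simp only [Pi.zero_apply, Function.comp_apply]
      exact Complex.zero_le_real.mpr (Real.sqrt_nonneg _)
  simpa [Matrix.star_eq_conjTranspose] using
    hd.mul_mul_conjTranspose_same (hA.1.eigenvectorUnitary : Matrix n n ℂ)

lemma Matrix.PosSemidef.sqrt_mul_self {n : Type*} [Fintype n] [DecidableEq n]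
    {A : Matrix n n ℂ} (hA : A.PosSemidef) : hA.sqrt * hA.sqrt = A := by
  unfold Matrix.PosSemidef.sqrt
  set V : Matrix n n ℂ := (hA.1.eigenvectorUnitary : Matrix n n ℂ) with hV
  have hV1 : star V * V = 1 := Matrix.mem_unitaryGroup_iff'.mp hA.1.eigenvectorUnitary.2
  have hS : A = V * diagonal ((↑) ∘ hA.1.eigenvalues) * star V := hA.1.spectral_theorem
  have key : ∀ D E : Matrix n n ℂ, V * D * star V * (V * E * star V) = V * (D * E) * star V := by
    intro D E
    rw [show V * D * star V * (V * E * star V) = V * (D * (star V * V) * E) * star V by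
      simp only [Matrix.mul_assoc], hV1, Matrix.mul_one]
  change V * _ * star V * (V * _ * star V) = A
  rw [key, diagonal_mul_diagonal]
  conv_rhs => rw [hS]
  refine congrArg (fun D => V * diagonal D * star V) (funext fun i => ?_)
  simp only [Function.comp_apply]
  exact (Complex.ofReal_mul _ _).symm.trans
    (congrArg Complex.ofReal (Real.mul_self_sqrt (hA.eigenvalues_nonneg i)))

open Matrix
open scoped ComplexOrder

lemma dot_self_re {n : Type*} [Fintype n] (a : n → ℂ) :
    (star a ⬝ᵥ a).re = ∑ i, ‖a i‖ ^ 2 := by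
  simp [dotProduct, Complex.re_sum, Pi.star_apply, Complex.normSq_eq_norm_sq,
    ← Complex.normSq_eq_conj_mul_self, ← Complex.ofReal_pow]

lemma cs_dot {n : Type*} [Fintype n] (a b : n → ℂ) :
    ‖star a ⬝ᵥ b‖ ≤ Real.sqrt ((star a ⬝ᵥ a).re) * Real.sqrt ((star b ⬝ᵥ b).re) := by
  rw [dot_self_re, dot_self_re]
  have h1 : ‖star a ⬝ᵥ b‖ ≤ ∑ i, ‖a i‖ * ‖b i‖ := by
    refine (norm_sum_le _ _).trans_eq ?_
    exact Finset.sum_congr rfl fun i _ => by simp [Pi.star_apply, norm_mul]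
  refine h1.trans ?_
  have h2 := Finset.sum_mul_sq_le_sq_mul_sq Finset.univ (fun i => ‖a i‖)
    (fun i => ‖b i‖)
  have h3 : 0 ≤ ∑ i, ‖a i‖ * ‖b i‖ :=
    Finset.sum_nonneg fun i _ => mul_nonneg (norm_nonneg _) (norm_nonneg _)
  calc ∑ i, ‖a i‖ * ‖b i‖
      = Real.sqrt ((∑ i, ‖a i‖ * ‖b i‖) ^ 2) := by
        rw [Real.sqrt_sq h3]
    _ ≤ Real.sqrt ((∑ i, ‖a i‖ ^ 2) * ∑ i, ‖b i‖ ^ 2) :=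
        Real.sqrt_le_sqrt h2
    _ = _ := Real.sqrt_mul (Finset.sum_nonneg fun i _ => sq_nonneg _) _

-- trace identity: sum over eigenbasis columns of a unitary
lemma sum_dot_eq_trace {n : Type*} [Fintype n] [DecidableEq n]
    (U : Matrix.unitaryGroup n ℂ) (B : Matrix n n ℂ) :
    ∑ i, star (fun k => (U : Matrix n n ℂ) k i) ⬝ᵥ (B *ᵥ fun k => (U : Matrix n n ℂ) k i)
      = B.trace := by
  have h1 : ∀ i, star (fun k => (U : Matrix n n ℂ) k i) ⬝ᵥ (B *ᵥ fun k => (U : Matrix n n ℂ) k i)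
      = ((U : Matrix n n ℂ)ᴴ * B * (U : Matrix n n ℂ)) i i := by
    intro i
    simp only [Matrix.mul_apply, dotProduct, Matrix.mulVec, Matrix.conjTranspose_apply,
      Pi.star_apply, dotProduct, Finset.sum_mul, Finset.mul_sum]
    rw [Finset.sum_comm]
    exact Finset.sum_congr rfl fun k _ => Finset.sum_congr rfl fun l _ => by ring
  simp_rw [h1]
  have h2 : ∑ i, ((U : Matrix n n ℂ)ᴴ * B * (U : Matrix n n ℂ)) i i
      = ((U : Matrix n n ℂ)ᴴ * B * (U : Matrix n n ℂ)).trace := rfl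
  rw [h2, Matrix.trace_mul_cycle, ← Matrix.star_eq_conjTranspose,
    (Matrix.mem_unitaryGroup_iff.mp U.2), Matrix.one_mul]

lemma exists_W {n : Type*} [Fintype n] [DecidableEq n]
    (A M : Matrix n n ℂ) (hAM : Aᴴ * A = M) (hM : M.PosSemidef) :
    ∃ W : Matrix n n ℂ, Wᴴ * A = hM.sqrt ∧ (1 - Wᴴ * W).PosSemidef := by
  set V : Matrix n n ℂ := (hM.1.eigenvectorUnitary : Matrix n n ℂ) with hV
  set μ : n → ℝ := hM.1.eigenvalues with hμ
  have hμ0 : ∀ i, 0 ≤ μ i := hM.eigenvalues_nonneg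
  have hS : hM.sqrt = V * diagonal ((↑) ∘ Real.sqrt ∘ μ) * Vᴴ := rfl
  have hV1 : Vᴴ * V = 1 := by
    rw [← Matrix.star_eq_conjTranspose]
    exact Matrix.mem_unitaryGroup_iff'.mp hM.1.eigenvectorUnitary.2
  have hV2 : V * Vᴴ = 1 := by
    rw [← Matrix.star_eq_conjTranspose]
    exact Matrix.mem_unitaryGroup_iff.mp hM.1.eigenvectorUnitary.2
  have hDD : ∀ f h : n → ℝ, (V * diagonal ((↑) ∘ f) * Vᴴ) * (V * diagonal ((↑) ∘ h) * Vᴴ)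
      = V * diagonal ((↑) ∘ (fun i => f i * h i)) * Vᴴ := by
    intro f h
    calc (V * diagonal ((↑) ∘ f) * Vᴴ) * (V * diagonal ((↑) ∘ h) * Vᴴ)
        = V * (diagonal ((↑) ∘ f) * (Vᴴ * V) * diagonal ((↑) ∘ h)) * Vᴴ := by
          simp only [Matrix.mul_assoc]
      _ = V * diagonal ((↑) ∘ (fun i => f i * h i)) * Vᴴ := by
          rw [hV1, Matrix.mul_one, diagonal_mul_diagonal]
          congr 1
          funext i
          simp [Function.comp_def, Complex.ofReal_mul]
  have hSpec : M = V * diagonal ((↑) ∘ μ) * Vᴴ := hM.1.spectral_theorem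
  set g : n → ℝ := fun i => if μ i = 0 then 0 else (Real.sqrt (μ i))⁻¹ with hg
  set T : Matrix n n ℂ := V * diagonal ((↑) ∘ g) * Vᴴ with hT
  have hstar : star ((↑) ∘ g : n → ℂ) = ((↑) ∘ g : n → ℂ) := by
    funext i; simp [Function.comp_def, Complex.conj_ofReal]
  have hTherm : Tᴴ = T := by
    rw [hT]
    simp only [Matrix.conjTranspose_mul, Matrix.conjTranspose_conjTranspose,
      Matrix.diagonal_conjTranspose, hstar]
    simp only [Matrix.mul_assoc]
  have hfun : (fun i => g i * μ i) = Real.sqrt ∘ μ := by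
    funext i
    by_cases h : μ i = 0
    · simp [hg, h]
    · have hp : 0 < μ i := (hμ0 i).lt_of_ne (Ne.symm h)
      have hs : Real.sqrt (μ i) ≠ 0 := ne_of_gt (Real.sqrt_pos.mpr hp)
      simp only [hg, h, if_false, Function.comp_apply]
      field_simp
      exact (Real.sq_sqrt (hμ0 i)).symm
  have hTM : T * M = hM.sqrt := by
    have h6 : T * M = V * diagonal ((↑) ∘ fun i => g i * μ i) * Vᴴ := by
      rw [hSpec, hT, hDD]
    rw [h6, hfun, hS]
  refine ⟨A * T, ?_, ?_⟩
  · have h1 : (A * T)ᴴ * A = T * M := by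
      rw [Matrix.conjTranspose_mul, hTherm, Matrix.mul_assoc, hAM]
    rw [h1, hTM]
  · have h2 : (A * T)ᴴ * (A * T) = T * M * T := by
      rw [Matrix.conjTranspose_mul, hTherm, Matrix.mul_assoc, ← Matrix.mul_assoc Aᴴ, hAM,
        ← Matrix.mul_assoc, ← Matrix.mul_assoc]
    set d : n → ℝ := fun i => if μ i = 0 then 0 else 1 with hd
    have hfun2 : (fun i => (Real.sqrt ∘ μ) i * g i) = d := by
      funext i
      by_cases h : μ i = 0
      · simp [hg, hd, h, Function.comp_apply]
      · have hp : 0 < μ i := (hμ0 i).lt_of_ne (Ne.symm h)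
        have hs : Real.sqrt (μ i) ≠ 0 := ne_of_gt (Real.sqrt_pos.mpr hp)
        simp only [hg, hd, h, if_false, Function.comp_apply]
        exact mul_inv_cancel₀ hs
    have h3 : T * M * T = V * diagonal ((↑) ∘ d) * Vᴴ := by
      rw [hTM, hS, hT, hDD, hfun2]
    rw [h2, h3]
    have h7 : (diagonal ((↑) ∘ fun _ => (1:ℝ)) : Matrix n n ℂ) - diagonal ((↑) ∘ d)
        = diagonal ((↑) ∘ fun i => 1 - d i) := by
      ext i j
      by_cases hij : i = j <;>
        simp [hij, Matrix.diagonal_apply, Complex.ofReal_sub]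
    have h5 : (1 : Matrix n n ℂ) = V * diagonal ((↑) ∘ fun _ => (1:ℝ)) * Vᴴ := by
      simp [Function.comp_def, hV2]
    have h4 : (1 : Matrix n n ℂ) - V * diagonal ((↑) ∘ d) * Vᴴ
        = V * diagonal ((↑) ∘ fun i => 1 - d i) * Vᴴ := by
      rw [h5, ← Matrix.sub_mul, ← Matrix.mul_sub, h7]
    rw [h4]
    apply Matrix.PosSemidef.mul_mul_conjTranspose_same
    refine Matrix.posSemidef_diagonal_iff.mpr fun i => ?_
    rw [Function.comp_apply, Complex.zero_le_real]
    by_cases h : μ i = 0 <;> simp [hd, h]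

lemma dot_W_shift {n : Type*} [Fintype n] (W : Matrix n n ℂ) (a : n → ℂ) (b : n → ℂ) :
    star a ⬝ᵥ (Wᴴ *ᵥ b) = star (W *ᵥ a) ⬝ᵥ b := by
  rw [Matrix.star_mulVec, Matrix.dotProduct_mulVec]

lemma contract_re {n : Type*} [Fintype n] [DecidableEq n] {W : Matrix n n ℂ}
    (h : ((1 : Matrix n n ℂ) - Wᴴ * W).PosSemidef) (y : n → ℂ) :
    (star (W *ᵥ y) ⬝ᵥ (W *ᵥ y)).re ≤ (star y ⬝ᵥ y).re := by
  have h0 := h.dotProduct_mulVec_nonneg y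
  rw [Matrix.sub_mulVec, dotProduct_sub, Matrix.one_mulVec] at h0
  have h1 : star (W *ᵥ y) ⬝ᵥ (W *ᵥ y) = star y ⬝ᵥ ((Wᴴ * W) *ᵥ y) := by
    rw [← Matrix.mulVec_mulVec, ← dot_W_shift W y (W *ᵥ y)]
  rw [Complex.le_def] at h0
  simp only [Complex.zero_re, Complex.sub_re] at h0
  rw [h1]
  linarith [h0.1]

lemma dot_herm_shift {n : Type*} [Fintype n] {B : Matrix n n ℂ} (hB : B.IsHermitian)
    (a b : n → ℂ) : star a ⬝ᵥ (B *ᵥ b) = star (B *ᵥ a) ⬝ᵥ b := by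
  conv_lhs => rw [← hB.eq]
  exact dot_W_shift B a b

lemma trace_re_nonneg {n : Type*} [Fintype n] [DecidableEq n] {S : Matrix n n ℂ}
    (hS : S.PosSemidef) : 0 ≤ S.trace.re := by
  rw [Matrix.trace, Complex.re_sum]
  refine Finset.sum_nonneg fun i _ => ?_
  have h1 : S.diag i = star (Pi.single i 1) ⬝ᵥ (S *ᵥ Pi.single i (1:ℂ)) := by
    simp [Matrix.diag, Matrix.mulVec, dotProduct, Pi.single_apply, Pi.star_apply,
      Finset.mul_sum, apply_ite]
  rw [h1]
  have := hS.re_dotProduct_nonneg (Pi.single i 1)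
  simpa [RCLike.re_to_complex] using this

private theorem stmt4_aux {n : Type*} [Fintype n] [DecidableEq n]
    (ρ σ : Matrix n n ℂ)
    (hρ : ρ.PosSemidef) (hσ : σ.PosSemidef)
    (hρ1 : ρ.trace = 1) (hσ1 : σ.trace = 1)
    (hM : (hσ.sqrt * ρ * hσ.sqrt).PosSemidef) :
    (∑ i, |(hρ.1.sub hσ.1).eigenvalues i|) ≤
      2 * Real.sqrt (1 - (hM.sqrt.trace).re ^ 2) := by
  classical
  set u : n → n → ℂ := fun i => ⇑((hρ.1.sub hσ.1).eigenvectorBasis i) with hu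
  set p : n → ℝ := fun i => (star (u i) ⬝ᵥ (ρ *ᵥ u i)).re with hpdef
  set q : n → ℝ := fun i => (star (u i) ⬝ᵥ (σ *ᵥ u i)).re with hqdef
  have hp0 : ∀ i, 0 ≤ p i := fun i => by
    have := hρ.re_dotProduct_nonneg (u i); simpa [RCLike.re_to_complex] using this
  have hq0 : ∀ i, 0 ≤ q i := fun i => by
    have := hσ.re_dotProduct_nonneg (u i); simpa [RCLike.re_to_complex] using this
  -- eigenvalues are p - q
  have hlam : ∀ i, (hρ.1.sub hσ.1).eigenvalues i = p i - q i := by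
    intro i
    have h := (hρ.1.sub hσ.1).eigenvalues_eq i
    rw [Matrix.sub_mulVec, dotProduct_sub] at h
    simpa [RCLike.re_to_complex, Complex.sub_re, hpdef, hqdef, hu] using h
  -- columns of the eigenvector unitary
  have hcol : ∀ i, (fun k => ((hρ.1.sub hσ.1).eigenvectorUnitary : Matrix n n ℂ) k i) = u i :=
    fun i => funext fun k => Matrix.IsHermitian.eigenvectorUnitary_apply _ k i
  have htr : ∀ B : Matrix n n ℂ, ∑ i, star (u i) ⬝ᵥ (B *ᵥ u i) = B.trace := by
    intro B
    rw [← sum_dot_eq_trace ((hρ.1.sub hσ.1).eigenvectorUnitary) B]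
    exact Finset.sum_congr rfl fun i _ => by rw [hcol]
  have hsum_p : ∑ i, p i = 1 := by
    have h := htr ρ
    rw [hρ1] at h
    have : (∑ i, star (u i) ⬝ᵥ (ρ *ᵥ u i)).re = (1:ℂ).re := by rw [h]
    rwa [Complex.re_sum, Complex.one_re] at this
  have hsum_q : ∑ i, q i = 1 := by
    have h := htr σ
    rw [hσ1] at h
    have : (∑ i, star (u i) ⬝ᵥ (σ *ᵥ u i)).re = (1:ℂ).re := by rw [h]
    rwa [Complex.re_sum, Complex.one_re] at this
  -- fidelity bound
  have hAM : (hρ.sqrt * hσ.sqrt)ᴴ * (hρ.sqrt * hσ.sqrt) = hσ.sqrt * ρ * hσ.sqrt := by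
    rw [Matrix.conjTranspose_mul, hρ.posSemidef_sqrt.1.eq, hσ.posSemidef_sqrt.1.eq,
      Matrix.mul_assoc hσ.sqrt hρ.sqrt, ← Matrix.mul_assoc hρ.sqrt hρ.sqrt,
      hρ.sqrt_mul_self, ← Matrix.mul_assoc]
  obtain ⟨W, hWA, hWP⟩ := exists_W (hρ.sqrt * hσ.sqrt) (hσ.sqrt * ρ * hσ.sqrt) hAM hM
  have hq' : ∀ i, (star (hσ.sqrt *ᵥ u i) ⬝ᵥ (hσ.sqrt *ᵥ u i)).re = q i := by
    intro i
    rw [← dot_herm_shift hσ.posSemidef_sqrt.1, Matrix.mulVec_mulVec, hσ.sqrt_mul_self]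
  have hp' : ∀ i, (star (hρ.sqrt *ᵥ u i) ⬝ᵥ (hρ.sqrt *ᵥ u i)).re = p i := by
    intro i
    rw [← dot_herm_shift hρ.posSemidef_sqrt.1, Matrix.mulVec_mulVec, hρ.sqrt_mul_self]
  have htrS : hM.sqrt.trace = ∑ i, star (W *ᵥ (hσ.sqrt *ᵥ u i)) ⬝ᵥ (hρ.sqrt *ᵥ u i) := by
    rw [← hWA, ← Matrix.mul_assoc, Matrix.trace_mul_cycle, ← htr (hσ.sqrt * Wᴴ * hρ.sqrt)]
    refine Finset.sum_congr rfl fun i _ => ?_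
    have e1 : (hσ.sqrt * Wᴴ * hρ.sqrt) *ᵥ u i = hσ.sqrt *ᵥ (Wᴴ *ᵥ (hρ.sqrt *ᵥ u i)) := by
      rw [Matrix.mulVec_mulVec, Matrix.mulVec_mulVec]
    rw [e1, dot_herm_shift hσ.posSemidef_sqrt.1, dot_W_shift]
  have habs : ∀ i, ‖star (W *ᵥ (hσ.sqrt *ᵥ u i)) ⬝ᵥ (hρ.sqrt *ᵥ u i)‖
      ≤ Real.sqrt (q i) * Real.sqrt (p i) := by
    intro i
    refine (cs_dot _ _).trans ?_
    have h1 : (star (W *ᵥ (hσ.sqrt *ᵥ u i)) ⬝ᵥ (W *ᵥ (hσ.sqrt *ᵥ u i))).re ≤ q i := by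
      rw [← hq' i]; exact contract_re hWP _
    have h2 := hp' i
    rw [h2]
    exact mul_le_mul_of_nonneg_right (Real.sqrt_le_sqrt h1) (Real.sqrt_nonneg _)
  have hF : (hM.sqrt.trace).re ≤ ∑ i, Real.sqrt (p i) * Real.sqrt (q i) := by
    rw [htrS, Complex.re_sum]
    refine Finset.sum_le_sum fun i _ => ?_
    refine (Complex.re_le_norm _).trans ?_
    rw [mul_comm (Real.sqrt (p i))]
    exact habs i
  have hF0 : 0 ≤ (hM.sqrt.trace).re := trace_re_nonneg hM.posSemidef_sqrt
  -- endgame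
  set F := (hM.sqrt.trace).re with hFdef
  set SB := ∑ i, Real.sqrt (p i) * Real.sqrt (q i) with hSB
  have hlamabs : ∀ i, |(hρ.1.sub hσ.1).eigenvalues i|
      = |Real.sqrt (p i) - Real.sqrt (q i)| * (Real.sqrt (p i) + Real.sqrt (q i)) := by
    intro i
    rw [hlam i, ← abs_of_nonneg (by positivity : (0:ℝ) ≤ Real.sqrt (p i) + Real.sqrt (q i)),
      ← abs_mul]
    congr 1
    have e1 := Real.sq_sqrt (hp0 i)
    have e2 := Real.sq_sqrt (hq0 i)
    nlinarith [e1, e2]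
  have hCS := Finset.sum_mul_sq_le_sq_mul_sq Finset.univ
    (fun i => |Real.sqrt (p i) - Real.sqrt (q i)|) (fun i => Real.sqrt (p i) + Real.sqrt (q i))
  have hsum1 : ∑ i, (|Real.sqrt (p i) - Real.sqrt (q i)|) ^ 2 = 2 - 2 * SB := by
    have e : ∀ i, (|Real.sqrt (p i) - Real.sqrt (q i)|) ^ 2
        = (p i + q i) - 2 * (Real.sqrt (p i) * Real.sqrt (q i)) := by
      intro i
      rw [sq_abs, sub_sq, Real.sq_sqrt (hp0 i), Real.sq_sqrt (hq0 i)]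
      ring
    rw [Finset.sum_congr rfl fun i _ => e i, Finset.sum_sub_distrib, Finset.sum_add_distrib,
      hsum_p, hsum_q, ← Finset.mul_sum, ← hSB]
    ring
  have hsum2 : ∑ i, (Real.sqrt (p i) + Real.sqrt (q i)) ^ 2 = 2 + 2 * SB := by
    have e : ∀ i, (Real.sqrt (p i) + Real.sqrt (q i)) ^ 2
        = (p i + q i) + 2 * (Real.sqrt (p i) * Real.sqrt (q i)) := by
      intro i
      rw [add_sq, Real.sq_sqrt (hp0 i), Real.sq_sqrt (hq0 i)]
      ring
    rw [Finset.sum_congr rfl fun i _ => e i, Finset.sum_add_distrib, Finset.sum_add_distrib,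
      hsum_p, hsum_q, ← Finset.mul_sum, ← hSB]
    ring
  have hL0 : 0 ≤ ∑ i, |(hρ.1.sub hσ.1).eigenvalues i| :=
    Finset.sum_nonneg fun i _ => abs_nonneg _
  have hkey : (∑ i, |(hρ.1.sub hσ.1).eigenvalues i|) ^ 2 ≤ 4 * (1 - F ^ 2) := by
    have h8 : (∑ i, |(hρ.1.sub hσ.1).eigenvalues i|) ^ 2 ≤ (2 - 2 * SB) * (2 + 2 * SB) := by
      rw [← hsum1, ← hsum2]
      calc (∑ i, |(hρ.1.sub hσ.1).eigenvalues i|) ^ 2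
          = (∑ i, |Real.sqrt (p i) - Real.sqrt (q i)| * (Real.sqrt (p i) + Real.sqrt (q i))) ^ 2 := by
            rw [Finset.sum_congr rfl fun i _ => hlamabs i]
        _ ≤ _ := hCS
    have hFSB : F ≤ SB := hF
    nlinarith [hF0, hFSB, h8]
  have h9 : 0 ≤ 1 - F ^ 2 := by nlinarith [hkey, sq_nonneg (∑ i, |(hρ.1.sub hσ.1).eigenvalues i|)]
  calc (∑ i, |(hρ.1.sub hσ.1).eigenvalues i|)
      = Real.sqrt ((∑ i, |(hρ.1.sub hσ.1).eigenvalues i|) ^ 2) := (Real.sqrt_sq hL0).symm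
    _ ≤ Real.sqrt (4 * (1 - F ^ 2)) := Real.sqrt_le_sqrt hkey
    _ = 2 * Real.sqrt (1 - F ^ 2) := by
        rw [show (4:ℝ) * (1 - F ^ 2) = 2 ^ 2 * (1 - F ^ 2) by ring,
          Real.sqrt_mul (by positivity), Real.sqrt_sq (by norm_num)]

/-- Fuchs–van de Graaf: for density matrices `ρ, σ`,
`‖ρ - σ‖₁ ≤ 2 √(1 - F(ρ,σ)²)`, where the fidelity is
`F(ρ,σ) = tr √(σ^{1/2} ρ σ^{1/2})`. (The hypothesis `hM`, positive semidefiniteness of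
`σ^{1/2} ρ σ^{1/2}`, always holds; it is included so that its square root is defined.) -/
theorem stmt4 {n : Type*} [Fintype n] [DecidableEq n]
    (ρ σ : Matrix n n ℂ)
    (hρ : ρ.PosSemidef) (hσ : σ.PosSemidef)
    (hρ1 : ρ.trace = 1) (hσ1 : σ.trace = 1)
    (hM : (hσ.sqrt * ρ * hσ.sqrt).PosSemidef) :
    traceNorm (hρ.1.sub hσ.1) ≤ 2 * Real.sqrt (1 - (hM.sqrt.trace).re ^ 2) := by
  unfold traceNorm
  exact stmt4_aux ρ σ hρ hσ hρ1 hσ1 hM
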